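/- Let A be a real n×n matrix with A² = −I. If X is a symmetric matrix in the range of the Stein operator S_A and S_A(X) is positive semidefinite, then X = 0. -/

import Mathlib

open Matrix

lemma psd_neg_psd_eq_zero {n : ℕ} {X : Matrix (Fin n) (Fin n) ℝ}
    (h1 : X.PosSemidef) (h2 : (-X).PosSemidef) : X = 0 := by
  have hH := h1.isHermitian
  have heig : ∀ i, hH.eigenvalues i = 0 := by
    intro i
    have hge := h1.eigenvalues_nonneg i
    have hle : hH.eigenvalues i ≤ 0 := by
      have := h2.re_dotProduct_nonneg ⇑(hH.eigenvectorBasis i)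
      rw [hH.eigenvalues_eq i]
      simp only [neg_mulVec, dotProduct_neg, map_neg] at this
      linarith
    linarith
  have := hH.spectral_theorem
  rw [this]
  have : (diagonal (RCLike.ofReal ∘ hH.eigenvalues) : Matrix (Fin n) (Fin n) ℝ) = 0 := by
    ext i j
    by_cases h : i = j <;> simp [diagonal, h, heig]
  rw [this, map_zero]

/-- If `A² = −I`, the Stein operator `S_A(X) = X − AXAᵀ` is trivially range
monotone: `X` symmetric, `X ∈ R(S_A)` and `S_A(X) ⪰ 0` imply `X = 0`. -/
theorem stein_trivially_range_monotone_of_sq_eq_neg_one {n : ℕ}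
    (A : Matrix (Fin n) (Fin n) ℝ) (hA : A * A = -1)
    (X : Matrix (Fin n) (Fin n) ℝ) (hX : Xᵀ = X)
    (hrange : ∃ Y : Matrix (Fin n) (Fin n) ℝ, Yᵀ = Y ∧ Y - A * Y * Aᵀ = X)
    (hpsd : (X - A * X * Aᵀ).PosSemidef) : X = 0 := by
  obtain ⟨Y, hY, hYX⟩ := hrange
  have hAt : Aᵀ * Aᵀ = -1 := by
    rw [← transpose_mul, hA]; simp
  have key : A * X * Aᵀ = -X := by
    rw [← hYX]
    have e1 : A * (Y - A * Y * Aᵀ) * Aᵀ = A * Y * Aᵀ - (A * A) * Y * (Aᵀ * Aᵀ) := by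
      noncomm_ring
    rw [e1, hA, hAt]
    noncomm_ring
  have h2X : X - A * X * Aᵀ = (2 : ℝ) • X := by
    rw [key, sub_neg_eq_add, two_smul]
  rw [h2X] at hpsd
  have hXpsd : X.PosSemidef := by
    refine ⟨?_, fun x => ?_⟩
    · simpa [Matrix.IsHermitian] using hX
    · have h := hpsd.2 x
      have e : (x.sum fun i xi => x.sum fun j xj => star xi * ((2 : ℝ) • X) i j * xj) = 2 * (x.sum fun i xi => x.sum fun j xj => star xi * X i j * xj) := by
        simp only [Finsupp.sum, Finset.mul_sum, Matrix.smul_apply, smul_eq_mul]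
        exact Finset.sum_congr rfl fun _ _ => Finset.sum_congr rfl fun _ _ => by ring
      rw [e] at h
      linarith
  have hnegpsd : (-X).PosSemidef := by
    rw [← key]
    have := hXpsd.mul_mul_conjTranspose_same A
    simpa using this
  exact psd_neg_psd_eq_zero hXpsd hnegpsd
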